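/- In a stable configuration of the maximal matching algorithm, PRfree(i) is false for every node i. -/

import Mathlib

structure Config (V : Type*) where
  p : V → Option V
  m : V → Bool

variable {V : Type*}

def PRmarried (G : SimpleGraph V) (p : V → Option V) (i : V) : Prop :=
  ∃ j, G.Adj i j ∧ p i = some j ∧ p j = some i

def PRwaiting (G : SimpleGraph V) (p : V → Option V) (i : V) : Prop :=
  ∃ j, G.Adj i j ∧ p i = some j ∧ p j ≠ some i ∧ ¬ PRmarried G p j

def PRcondemned (G : SimpleGraph V) (p : V → Option V) (i : V) : Prop :=
  ∃ j, G.Adj i j ∧ p i = some j ∧ p j ≠ some i ∧ PRmarried G p j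

def PRdead (G : SimpleGraph V) (p : V → Option V) (i : V) : Prop :=
  p i = none ∧ ∀ j, G.Adj i j → PRmarried G p j

def PRfree (G : SimpleGraph V) (p : V → Option V) (i : V) : Prop :=
  p i = none ∧ ∃ j, G.Adj i j ∧ ¬ PRmarried G p j

def Valid (G : SimpleGraph V) (C : Config V) : Prop :=
  ∀ i j, C.p i = some j → G.Adj i j

section Rules
variable [LinearOrder V]

def UpdateEnabled (G : SimpleGraph V) (C : Config V) (i : V) : Prop :=
  ¬ (C.m i = true ↔ PRmarried G C.p i)

def MarriageEnabled (G : SimpleGraph V) (C : Config V) (i : V) : Prop :=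
  (C.m i = true ↔ PRmarried G C.p i) ∧ C.p i = none ∧ ∃ j, G.Adj i j ∧ C.p j = some i

def SeductionEnabled (G : SimpleGraph V) (C : Config V) (i : V) : Prop :=
  (C.m i = true ↔ PRmarried G C.p i) ∧ C.p i = none ∧
    (∀ k, G.Adj i k → C.p k ≠ some i) ∧
    ∃ j, G.Adj i j ∧ C.p j = none ∧ i < j ∧ C.m j = false

def AbandonmentEnabled (G : SimpleGraph V) (C : Config V) (i : V) : Prop :=
  (C.m i = true ↔ PRmarried G C.p i) ∧
    ∃ j, G.Adj i j ∧ C.p i = some j ∧ C.p j ≠ some i ∧ (C.m j = true ∨ j ≤ i)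

def Eligible (G : SimpleGraph V) (C : Config V) (i : V) : Prop :=
  UpdateEnabled G C i ∨ MarriageEnabled G C i ∨ SeductionEnabled G C i ∨ AbandonmentEnabled G C i

def Stable (G : SimpleGraph V) (C : Config V) : Prop := ∀ i, ¬ Eligible G C i

def Unchanged (C C' : Config V) (i : V) : Prop := C'.p i = C.p i ∧ C'.m i = C.m i

def DoesUpdate (G : SimpleGraph V) (C C' : Config V) (i : V) : Prop :=
  UpdateEnabled G C i ∧ C'.p i = C.p i ∧ (C'.m i = true ↔ PRmarried G C.p i)

def DoesMarriageTo (G : SimpleGraph V) (C C' : Config V) (i j : V) : Prop :=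
  MarriageEnabled G C i ∧ G.Adj i j ∧ C.p j = some i ∧ C'.p i = some j ∧ C'.m i = C.m i

def DoesSeductionTo (G : SimpleGraph V) (C C' : Config V) (i j : V) : Prop :=
  SeductionEnabled G C i ∧ G.Adj i j ∧ C.p j = none ∧ i < j ∧ C.m j = false ∧
    (∀ k, G.Adj i k → C.p k = none → i < k → C.m k = false → k ≤ j) ∧
    C'.p i = some j ∧ C'.m i = C.m i

def DoesAbandonmentFrom (G : SimpleGraph V) (C C' : Config V) (i j : V) : Prop :=
  AbandonmentEnabled G C i ∧ C.p i = some j ∧ C'.p i = none ∧ C'.m i = C.m i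

def Moves (G : SimpleGraph V) (C C' : Config V) (i : V) : Prop :=
  DoesUpdate G C C' i ∨ (∃ j, DoesMarriageTo G C C' i j) ∨
    (∃ j, DoesSeductionTo G C C' i j) ∨ (∃ j, DoesAbandonmentFrom G C C' i j)

def Step (G : SimpleGraph V) (C C' : Config V) : Prop :=
  (∃ i, Moves G C C' i) ∧ ∀ i, Moves G C C' i ∨ Unchanged C C' i

def MSAMoveTo (G : SimpleGraph V) (C C' : Config V) (i j : V) : Prop :=
  DoesMarriageTo G C C' i j ∨ DoesSeductionTo G C C' i j ∨ DoesAbandonmentFrom G C C' i j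

def IJMove (G : SimpleGraph V) (C C' : Config V) (i j : V) : Prop :=
  MSAMoveTo G C C' i j ∨ MSAMoveTo G C C' j i

end Rules

theorem stable_not_free [Fintype V] [LinearOrder V] (G : SimpleGraph V)
    (C : Config V) (hvalid : Valid G C) (hstable : Stable G C) :
    ∀ i, ¬ PRfree G C.p i := by
  classical
  have hupd : ∀ i, C.m i = true ↔ PRmarried G C.p i := by
    intro i
    by_contra h
    exact hstable i (Or.inl h)
  -- no waiting node
  have hnowait : ∀ j, ¬ PRwaiting G C.p j := by
    intro j
    induction j using WellFoundedGT.induction with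
    | _ j ih =>
      rintro ⟨k, hadj, hpj, hpk, hnm⟩
      have hmk : C.m k = false := by
        rcases Bool.eq_false_or_eq_true (C.m k) with h | h
        · exact absurd ((hupd k).1 h) hnm
        · exact h
      -- abandonment at j not enabled
      have hab : ¬ AbandonmentEnabled G C j := fun h =>
        hstable j (Or.inr (Or.inr (Or.inr h)))
      have hjk : j < k := by
        by_contra hlt
        exact hab ⟨hupd j, k, hadj, hpj, hpk, Or.inr (le_of_not_gt hlt)⟩
      -- p k cannot be none (else marriage at k enabled)
      cases hpkv : C.p k with
      | none =>
        exact hstable k (Or.inr (Or.inl ⟨hupd k, hpkv, j, hadj.symm, hpj⟩))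
      | some l =>
        have hadjkl : G.Adj k l := hvalid k l hpkv
        have hpl : C.p l ≠ some k := by
          intro h
          exact hnm ⟨l, hadjkl, hpkv, h⟩
        have hnml : ¬ PRmarried G C.p l := by
          intro hml
          exact hstable k (Or.inr (Or.inr (Or.inr
            ⟨hupd k, l, hadjkl, hpkv, hpl, Or.inl ((hupd l).2 hml)⟩)))
        exact ih k hjk ⟨l, hadjkl, hpkv, hpl, hnml⟩
  intro i hfree
  obtain ⟨hpi, j, hadj, hnmj⟩ := hfree
  have hmj : C.m j = false := by
    rcases Bool.eq_false_or_eq_true (C.m j) with h | h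
    · exact absurd ((hupd j).1 h) hnmj
    · exact h
  have hmi : C.m i = false := by
    rcases Bool.eq_false_or_eq_true (C.m i) with h | h
    case _ =>
      obtain ⟨k, _, hk, _⟩ := (hupd i).1 h
      simp [hpi] at hk
    case _ => exact h
  -- p j = none
  have hpj : C.p j = none := by
    cases hpjv : C.p j with
    | none => rfl
    | some k =>
      have hadjjk : G.Adj j k := hvalid j k hpjv
      have hpk : C.p k ≠ some j := fun h => hnmj ⟨k, hadjjk, hpjv, h⟩
      have hnmk : ¬ PRmarried G C.p k := by
        intro hmk
        exact hstable j (Or.inr (Or.inr (Or.inr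
          ⟨hupd j, k, hadjjk, hpjv, hpk, Or.inl ((hupd k).2 hmk)⟩)))
      exact absurd ⟨k, hadjjk, hpjv, hpk, hnmk⟩ (hnowait j)
  -- no neighbor points to i (marriage at i disabled), similarly for j
  have hmar : ∀ a, C.p a = none → ¬ ∃ b, G.Adj a b ∧ C.p b = some a := by
    intro a ha hb
    exact hstable a (Or.inr (Or.inl ⟨hupd a, ha, hb⟩))
  have hni : ∀ k, G.Adj i k → C.p k ≠ some i := by
    intro k hk hpk
    exact hmar i hpi ⟨k, hk, hpk⟩
  have hnj : ∀ k, G.Adj j k → C.p k ≠ some j := by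
    intro k hk hpk
    exact hmar j hpj ⟨k, hk, hpk⟩
  rcases lt_trichotomy i j with h | h | h
  · exact hstable i (Or.inr (Or.inr (Or.inl
      ⟨hupd i, hpi, hni, j, hadj, hpj, h, hmj⟩)))
  · exact G.loopless.irrefl i (h ▸ hadj)
  · exact hstable j (Or.inr (Or.inr (Or.inl
      ⟨hupd j, hpj, hnj, i, hadj.symm, hpi, h, hmi⟩)))
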